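/- arXiv:2211.14778 — 2 statements merged into one kernel-verified Lean document; each statement's English description precedes it below -/
import Mathlib

section
/- Let G be a finite group, C ≠ S a compound closed twin class of P(G) with root y of order p^r and parameter s (so that C = {z ∈ ⟨y⟩ : p^{s+1} ≤ o(z) ≤ p^r}). Then |C| = p^r − p^s and the neighbourhood closure satisfies Ĉ = ⟨y⟩, hence |Ĉ| = p^r. -/
/-- Closed neighbourhood of a vertex. -/
def closedNbhd {V : Type*} (Γ : SimpleGraph V) (x : V) : Set V := {y | Γ.Adj x y} ∪ {x}

/-- Closed neighbourhood of a set of vertices (intersection convention; N[∅] = univ). -/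
def closedNbhdSet {V : Type*} (Γ : SimpleGraph V) (X : Set V) : Set V :=
  ⋂ x ∈ X, closedNbhd Γ x

/-- Neighbourhood closure X̂ = N[N[X]]. -/
def nbhdClosure {V : Type*} (Γ : SimpleGraph V) (X : Set V) : Set V :=
  closedNbhdSet Γ (closedNbhdSet Γ X)

/-- Closed twin class of a vertex. -/
def twinClass {V : Type*} (Γ : SimpleGraph V) (y : V) : Set V :=
  {x | closedNbhd Γ x = closedNbhd Γ y}

/-- The power graph of a group. -/
def powerGraph (G : Type*) [Group G] : SimpleGraph G where
  Adj x y := x ≠ y ∧ ((∃ m : ℕ, 0 < m ∧ y = x ^ m) ∨ (∃ m : ℕ, 0 < m ∧ x = y ^ m))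
  symm := by constructor; rintro x y ⟨h, h2⟩; exact ⟨h.symm, h2.symm⟩
  loopless := by constructor; rintro x ⟨h, _⟩; exact h rfl

/-- The ⋄-class of an element: elements generating the same cyclic subgroup. -/
def diamondClass {G : Type*} [Group G] (y : G) : Set G :=
  {x | Subgroup.zpowers x = Subgroup.zpowers y}

open Subgroup

section Helpers

lemma isCyclic_zpowers' {G : Type*} [Group G] (y : G) : IsCyclic (zpowers y) := by
  refine ⟨⟨⟨y, mem_zpowers y⟩, ?_⟩⟩
  rintro ⟨x, k, rfl⟩
  exact ⟨k, by ext; simp⟩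

/-- In a finite cyclic group `⟨y⟩`, order divisibility gives membership. -/
lemma mem_zpowers_of_dvd' {G : Type*} [Group G] [Fintype G] {y z w : G}
    (hz : z ∈ zpowers y) (hw : w ∈ zpowers y) (h : orderOf z ∣ orderOf w) :
    z ∈ zpowers w := by
  classical
  set H := zpowers y
  haveI : IsCyclic H := isCyclic_zpowers' y
  set z' : H := ⟨z, hz⟩
  set w' : H := ⟨w, hw⟩
  have hoz : orderOf z' = orderOf z := orderOf_mk z hz
  have how : orderOf w' = orderOf w := orderOf_mk w hw
  have hw0 : 0 < orderOf w' := orderOf_pos w'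
  have hsub : ((zpowers w' : Subgroup H) : Set H).toFinset ⊆
      ({a : H | a ^ orderOf w' = 1} : Finset H) := by
    intro x hx
    rw [Set.mem_toFinset] at hx
    obtain ⟨k, rfl⟩ := hx
    simp only [Finset.mem_filter, Finset.mem_univ, true_and, Set.mem_setOf_eq]
    rw [← zpow_natCast, ← zpow_mul, mul_comm, zpow_mul, zpow_natCast, pow_orderOf_eq_one,
      one_zpow]
  have hcard : (({a : H | a ^ orderOf w' = 1} : Finset H)).card ≤ orderOf w' :=
    IsCyclic.card_pow_eq_one_le hw0
  have hcard2 : ((zpowers w' : Subgroup H) : Set H).toFinset.card = orderOf w' := by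
    rw [Set.toFinset_card, ← Nat.card_eq_fintype_card, SetLike.coe_sort_coe]
    exact Nat.card_zpowers w'
  have heq := Finset.eq_of_subset_of_card_le hsub (by omega)
  have hz'mem : z' ∈ ({a : H | a ^ orderOf w' = 1} : Finset H) := by
    simp only [Finset.mem_filter, Finset.mem_univ, true_and, Set.mem_setOf_eq]
    exact orderOf_dvd_iff_pow_eq_one.mp (by rw [hoz, how]; exact h)
  rw [← heq, Set.mem_toFinset] at hz'mem
  obtain ⟨k, hk⟩ := hz'mem
  exact ⟨k, congrArg Subtype.val hk⟩

/-- Any two elements of a cyclic `p`-group are comparable. -/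
lemma comparable' {G : Type*} [Group G] [Fintype G] {p a : ℕ} (hp : p.Prime) {u z w : G}
    (hu : orderOf u = p ^ a) (hz : z ∈ zpowers u) (hw : w ∈ zpowers u) :
    z ∈ zpowers w ∨ w ∈ zpowers z := by
  obtain ⟨i, hi, hoi⟩ := (Nat.dvd_prime_pow hp).mp (hu ▸ orderOf_dvd_of_mem_zpowers hz)
  obtain ⟨j, hj, hoj⟩ := (Nat.dvd_prime_pow hp).mp (hu ▸ orderOf_dvd_of_mem_zpowers hw)
  rcases le_total i j with h | h
  · exact Or.inl (mem_zpowers_of_dvd' hz hw (by rw [hoi, hoj]; exact pow_dvd_pow p h))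
  · exact Or.inr (mem_zpowers_of_dvd' hw hz (by rw [hoi, hoj]; exact pow_dvd_pow p h))

lemma mem_zpowers_nat' {G : Type*} [Group G] [Fintype G] {w z : G} (h : z ∈ zpowers w) :
    ∃ m : ℕ, 0 < m ∧ z = w ^ m := by
  obtain ⟨m, hm⟩ := mem_powers_iff_mem_zpowers.mpr h
  rcases Nat.eq_zero_or_pos m with rfl | hm0
  · exact ⟨orderOf w, orderOf_pos w, by rw [pow_orderOf_eq_one]; simpa using hm.symm⟩
  · exact ⟨m, hm0, by simpa using hm.symm⟩

lemma mem_closedNbhd_iff' {G : Type*} [Group G] [Fintype G] {x z : G} :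
    z ∈ closedNbhd (powerGraph G) x ↔ z ∈ zpowers x ∨ x ∈ zpowers z := by
  constructor
  · rintro (⟨-, (⟨m, -, rfl⟩ | ⟨m, -, hm⟩)⟩ | h)
    · exact Or.inl ⟨(m : ℤ), by simp⟩
    · exact Or.inr ⟨(m : ℤ), by simp [hm]⟩
    · rw [Set.mem_singleton_iff] at h
      subst h
      exact Or.inl (mem_zpowers _)
  · intro h
    by_cases hxz : z = x
    · exact Or.inr (by simp [hxz])
    · left
      refine ⟨Ne.symm hxz, ?_⟩
      rcases h with h | h
      · obtain ⟨m, hm0, hm⟩ := mem_zpowers_nat' h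
        exact Or.inl ⟨m, hm0, hm⟩
      · obtain ⟨m, hm0, hm⟩ := mem_zpowers_nat' h
        exact Or.inr ⟨m, hm0, hm⟩

lemma ncard_zpowers' {G : Type*} [Group G] [Fintype G] (g : G) :
    ((zpowers g : Subgroup G) : Set G).ncard = orderOf g := by
  rw [← Nat.card_coe_set_eq, SetLike.coe_sort_coe]
  exact Nat.card_zpowers g

end Helpers

theorem stmt12 {G : Type*} [Group G] [Fintype G] (C : Set G) (y : G) (p r s : ℕ)
    (hp : p.Prime) (hr : 2 ≤ r) (hs : s ≤ r - 2)
    (hC : C = twinClass (powerGraph G) y)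
    (hS : C ≠ twinClass (powerGraph G) 1)
    (hcomp : ∃ a ∈ C, ∃ b ∈ C, Subgroup.zpowers a ≠ Subgroup.zpowers b)
    (hy : orderOf y = p ^ r)
    (hdesc : C = {z | z ∈ Subgroup.zpowers y ∧ p ^ (s + 1) ≤ orderOf z ∧ orderOf z ≤ p ^ r}) :
    C.ncard = p ^ r - p ^ s ∧
      nbhdClosure (powerGraph G) C = (Subgroup.zpowers y : Set G) ∧
      (nbhdClosure (powerGraph G) C).ncard = p ^ r := by
  have hp1 : 1 < p := hp.one_lt
  have hsr : s + 1 < r := by omega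
  have hppos : 0 < p := hp.pos
  -- order of powers of y
  have horder : ∀ k : ℕ, k ≤ r → orderOf (y ^ p ^ k) = p ^ (r - k) := by
    intro k hk
    rw [orderOf_pow, hy, Nat.gcd_eq_right (pow_dvd_pow p hk), Nat.pow_div hk hppos]
  -- Part 1 : cardinality of C
  have htwin : ∀ x ∈ C, closedNbhd (powerGraph G) x = closedNbhd (powerGraph G) y := by
    intro x hx
    rw [hC] at hx
    exact hx
  have part1 : C.ncard = p ^ r - p ^ s := by
    have hot : orderOf (y ^ p ^ (r - s)) = p ^ s := by
      rw [horder (r - s) (by omega)]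
      congr 1
      omega
    have hty : y ^ p ^ (r - s) ∈ zpowers y := pow_mem (mem_zpowers y) _
    have hCdiff : C = (zpowers y : Set G) \ (zpowers (y ^ p ^ (r - s)) : Set G) := by
      rw [hdesc]
      ext z
      simp only [Set.mem_setOf_eq, Set.mem_diff, SetLike.mem_coe]
      constructor
      · rintro ⟨hzy, h1, h2⟩
        refine ⟨hzy, fun hzt => ?_⟩
        have hdvd := orderOf_dvd_of_mem_zpowers hzt
        rw [hot] at hdvd
        have := Nat.le_of_dvd (pow_pos hppos s) hdvd
        have hlt : p ^ s < p ^ (s + 1) := pow_lt_pow_right₀ hp1 (by omega)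
        omega
      · rintro ⟨hzy, hzt⟩
        have hdvd : orderOf z ∣ p ^ r := hy ▸ orderOf_dvd_of_mem_zpowers hzy
        obtain ⟨i, hi, hoi⟩ := (Nat.dvd_prime_pow hp).mp hdvd
        have hsi : s + 1 ≤ i := by
          by_contra hcon
          exact hzt (mem_zpowers_of_dvd' hzy hty
            (by rw [hoi, hot]; exact pow_dvd_pow p (by omega)))
        exact ⟨hzy, by rw [hoi]; exact pow_le_pow_right₀ hp1.le hsi,
          Nat.le_of_dvd (pow_pos hppos r) hdvd⟩
    have hsub : (zpowers (y ^ p ^ (r - s)) : Set G) ⊆ (zpowers y : Set G) :=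
      fun a ha => zpowers_le.mpr hty ha
    rw [hCdiff, Set.ncard_diff hsub, ncard_zpowers', ncard_zpowers', hy, hot]
  -- N[C] = N[y]
  have hyC : y ∈ C := by
    rw [hdesc]
    exact ⟨mem_zpowers y, by rw [hy]; exact pow_le_pow_right₀ hp1.le (by omega), by rw [hy]⟩
  have hNC : closedNbhdSet (powerGraph G) C = closedNbhd (powerGraph G) y := by
    apply subset_antisymm
    · exact Set.biInter_subset_of_mem hyC
    · intro w hw
      refine Set.mem_iInter₂.mpr fun x hx => ?_
      rw [htwin x hx]
      exact hw
  -- Part 2 : the closure is ⟨y⟩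
  have part2 : nbhdClosure (powerGraph G) C = (zpowers y : Set G) := by
    unfold nbhdClosure
    rw [hNC]
    apply subset_antisymm
    · intro u hu
      have hu' : ∀ w ∈ closedNbhd (powerGraph G) y, u ∈ closedNbhd (powerGraph G) w :=
        fun w hw => Set.mem_iInter₂.mp hu w hw
      by_contra hnot
      rw [SetLike.mem_coe] at hnot
      have hyu : y ∈ zpowers u := by
        have := hu' y (mem_closedNbhd_iff'.mpr (Or.inl (mem_zpowers y)))
        rcases mem_closedNbhd_iff'.mp this with h | h
        · exact absurd h hnot
        · exact h
      have hdvd_r : p ^ r ∣ orderOf u := hy ▸ orderOf_dvd_of_mem_zpowers hyu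
      have hne : orderOf u ≠ p ^ r := by
        intro he
        exact hnot (mem_zpowers_of_dvd' (mem_zpowers u) hyu (by rw [he, hy]))
      by_cases hppow : ∃ a, orderOf u = p ^ a
      · -- cyclic p-group case: find v of order p^(r+1) which is a twin of y
        obtain ⟨a, ha⟩ := hppow
        have har : r + 1 ≤ a := by
          have := (Nat.pow_dvd_pow_iff_le_right hp1).mp (ha ▸ hdvd_r)
          rcases Nat.lt_or_ge r a with h | h
          · omega
          · exfalso; apply hne; rw [ha]; congr 1; omega
        set v := u ^ p ^ (a - (r + 1)) with hv
        have hov : orderOf v = p ^ (r + 1) := by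
          rw [hv, orderOf_pow, ha, Nat.gcd_eq_right (pow_dvd_pow p (by omega)),
            Nat.pow_div (by omega) hppos]
          congr 1
          omega
        have hvu : v ∈ zpowers u := pow_mem (mem_zpowers u) _
        have hyv : y ∈ zpowers v :=
          mem_zpowers_of_dvd' hyu hvu (by rw [hy, hov]; exact pow_dvd_pow p (by omega))
        have htwv : v ∈ twinClass (powerGraph G) y := by
          show closedNbhd (powerGraph G) v = closedNbhd (powerGraph G) y
          ext w
          rw [mem_closedNbhd_iff', mem_closedNbhd_iff']
          constructor
          · rintro (h | h)
            · exact comparable' hp ha (zpowers_le.mpr hvu h) hyu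
            · exact Or.inr (zpowers_le.mpr h hyv)
          · rintro (h | h)
            · exact comparable' hp ha (zpowers_le.mpr hyu h) hvu
            · have hw' : w ∈ closedNbhd (powerGraph G) y :=
                mem_closedNbhd_iff'.mpr (Or.inr h)
              rcases mem_closedNbhd_iff'.mp (hu' w hw') with hc | hc
              · exact Or.inr (zpowers_le.mpr hc hvu)
              · exact comparable' hp ha hc hvu
        have hvC : v ∈ C := by rw [hC]; exact htwv
        rw [hdesc] at hvC
        have := hvC.2.2
        rw [hov] at this
        have hlt : p ^ r < p ^ (r + 1) := pow_lt_pow_right₀ hp1 (by omega)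
        omega
      · -- there is a prime q ≠ p dividing orderOf u
        have hn0 : orderOf u ≠ 0 := (orderOf_pos u).ne'
        obtain ⟨q, hq, hqdvd, hqp⟩ : ∃ q, q.Prime ∧ q ∣ orderOf u ∧ q ≠ p := by
          by_contra hcon
          push_neg at hcon
          exact hppow ⟨_, Nat.eq_prime_pow_of_unique_prime_dvd hn0
            (fun {d} hd hdd => hcon d hd hdd)⟩
        set w := u ^ (orderOf u / q) with hw
        have how : orderOf w = q := by
          rw [hw, orderOf_pow, Nat.gcd_eq_right (Nat.div_dvd_of_dvd hqdvd),
            Nat.div_div_self hqdvd hn0]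
        set z := y ^ p ^ (r - (s + 1)) with hz
        have hoz : orderOf z = p ^ (s + 1) := by
          rw [hz, horder (r - (s + 1)) (by omega)]
          congr 1
          omega
        have hzy : z ∈ zpowers y := pow_mem (mem_zpowers y) _
        have hzC : z ∈ C := by
          rw [hdesc]
          exact ⟨hzy, le_of_eq hoz.symm, by rw [hoz]; exact pow_le_pow_right₀ hp1.le (by omega)⟩
        have hzu : z ∈ zpowers u := zpowers_le.mpr hyu hzy
        have hwu : w ∈ zpowers u := pow_mem (mem_zpowers u) _
        have hcomm : Commute z w := by
          obtain ⟨i, hi⟩ := hzu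
          obtain ⟨j, hj⟩ := hwu
          rw [← hi, ← hj]
          exact Commute.zpow_zpow (Commute.refl u) i j
        have hpq : Nat.Coprime p q := (Nat.coprime_primes hp hq).mpr (Ne.symm hqp)
        have hcop : Nat.Coprime (p ^ (s + 1)) q := Nat.Coprime.pow_left _ hpq
        set x := z * w with hx
        have hox : orderOf x = p ^ (s + 1) * q := by
          rw [hx, hcomm.orderOf_mul_eq_mul_orderOf_of_coprime (by rw [hoz, how]; exact hcop)]
          rw [hoz, how]
        have hzx : z ∈ zpowers x := by
          have hxq : x ^ q = z ^ q := by
            rw [hx, hcomm.mul_pow, ← how, pow_orderOf_eq_one, mul_one]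
          have heuler : q ^ Nat.totient (p ^ (s + 1)) ≡ 1 [MOD p ^ (s + 1)] :=
            Nat.ModEq.pow_totient hcop.symm
          have htot : 1 ≤ Nat.totient (p ^ (s + 1)) :=
            Nat.totient_pos.mpr (pow_pos hppos _)
          have hzq : z ^ (q * q ^ (Nat.totient (p ^ (s + 1)) - 1)) = z := by
            rw [← pow_succ']
            have : q ^ (Nat.totient (p ^ (s + 1)) - 1 + 1) = q ^ Nat.totient (p ^ (s + 1)) := by
              congr 1
              omega
            rw [this]
            nth_rewrite 2 [← pow_one z]
            rw [pow_eq_pow_iff_modEq, hoz]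
            exact heuler
          refine ⟨((q * q ^ (Nat.totient (p ^ (s + 1)) - 1) : ℕ) : ℤ), ?_⟩
          show x ^ (((q * q ^ (Nat.totient (p ^ (s + 1)) - 1) : ℕ)) : ℤ) = z
          rw [zpow_natCast, pow_mul, hxq, ← pow_mul, hzq]
        have hxNz : x ∈ closedNbhd (powerGraph G) z := mem_closedNbhd_iff'.mpr (Or.inr hzx)
        have hxNy : x ∈ closedNbhd (powerGraph G) y := by
          rw [← htwin z hzC]
          exact hxNz
        rcases mem_closedNbhd_iff'.mp hxNy with h | h
        · have hdx := orderOf_dvd_of_mem_zpowers h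
          rw [hox, hy] at hdx
          have hqpr : q ∣ p ^ r := dvd_trans (dvd_mul_left q _) hdx
          exact hqp ((Nat.prime_dvd_prime_iff_eq hq hp).mp (hq.dvd_of_dvd_pow hqpr))
        · have hdy := orderOf_dvd_of_mem_zpowers h
          rw [hy, hox] at hdy
          have hpr : p ^ r ∣ p ^ (s + 1) :=
            (Nat.Coprime.pow_left r hpq).dvd_of_dvd_mul_right hdy
          have := (Nat.pow_dvd_pow_iff_le_right hp1).mp hpr
          omega
    · intro z hz
      rw [SetLike.mem_coe] at hz
      refine Set.mem_iInter₂.mpr fun w hw => ?_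
      rw [mem_closedNbhd_iff']
      rcases mem_closedNbhd_iff'.mp hw with h | h
      · rcases comparable' hp hy hz h with hc | hc
        · exact Or.inl hc
        · exact Or.inr hc
      · exact Or.inl (zpowers_le.mpr h hz)
  -- Part 3
  refine ⟨part1, part2, ?_⟩
  rw [part2, ncard_zpowers', hy]
end

section
/- Let G be a finite group and X = [x]_⋄, Y = [y]_⋄ distinct ⋄-classes with |X| = |Y| ≠ 1, such that y is a power of x. Then o(x) = 2·o(y) with o(y) odd, τ := x^{o(y)} is an involution not in X, and every element of X has τ as a power. -/
section Aux

open Subgroup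

lemma zpowersIsCyclic {G : Type*} [Group G] (x : G) : IsCyclic (zpowers x) := by
  refine ⟨⟨⟨x, mem_zpowers x⟩, fun a => ?_⟩⟩
  obtain ⟨n, hn⟩ := mem_zpowers_iff.mp a.2
  exact ⟨n, Subtype.ext (by simpa using hn)⟩

lemma subgroupEqOfLeOfCard {G : Type*} [Group G] [Fintype G] {H K : Subgroup G}
    (h : H ≤ K) (hc : Nat.card K ≤ Nat.card H) : H = K := by
  apply SetLike.coe_injective
  refine Set.eq_of_subset_of_ncard_le h ?_ (Set.toFinite _)
  rwa [← Nat.card_coe_set_eq, ← Nat.card_coe_set_eq]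

lemma diamondNcard {G : Type*} [Group G] [Fintype G] (x : G) :
    (diamondClass x).ncard = Nat.totient (orderOf x) := by
  classical
  have hcyc : IsCyclic (zpowers x) := zpowersIsCyclic x
  have hcard : Fintype.card (zpowers x) = orderOf x := by
    rw [← Nat.card_eq_fintype_card, Nat.card_zpowers]
  have key : diamondClass x
      = (fun a : zpowers x => (a : G)) '' {a : zpowers x | orderOf a = orderOf x} := by
    ext g
    simp only [Set.mem_image, Set.mem_setOf_eq, diamondClass]
    constructor
    · intro hg
      have hmem : g ∈ zpowers x := hg ▸ mem_zpowers g
      refine ⟨⟨g, hmem⟩, ?_, rfl⟩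
      rw [orderOf_mk, ← Nat.card_zpowers, ← Nat.card_zpowers x, hg]
    · rintro ⟨a, ha, rfl⟩
      rw [← orderOf_coe a] at ha
      have hle : zpowers (a : G) ≤ zpowers x := zpowers_le.mpr a.2
      refine subgroupEqOfLeOfCard hle ?_
      rw [Nat.card_zpowers, Nat.card_zpowers, ha]
  rw [key, Set.ncard_image_of_injective _ Subtype.coe_injective]
  have := IsCyclic.card_orderOf_eq_totient (α := zpowers x)
    (d := orderOf x) (hcard ▸ dvd_rfl)
  rw [← this, Set.ncard_eq_toFinset_card', Set.toFinset_setOf]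

lemma totientEqOfDvd {d n : ℕ} (hd : 0 < d) (hdvd : d ∣ n) (hne : d ≠ n)
    (htot : Nat.totient d = Nat.totient n) : n = 2 * d ∧ Odd d := by
  obtain ⟨k, rfl⟩ := hdvd
  have hk1 : k ≠ 1 := by rintro rfl; simp at hne
  have hk0 : k ≠ 0 := by
    rintro rfl
    rw [mul_zero, Nat.totient_zero] at htot
    exact (Nat.totient_pos.mpr hd).ne' htot
  have hsup := Nat.totient_super_multiplicative d k
  rw [← htot] at hsup
  have hφd : 0 < Nat.totient d := Nat.totient_pos.mpr hd
  have hφk : Nat.totient k ≤ 1 := by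
    by_contra h
    push_neg at h
    have : Nat.totient d * 2 ≤ Nat.totient d * Nat.totient k :=
      Nat.mul_le_mul_left _ h
    omega
  have hk2 : k = 2 := by
    have h2 := Nat.dvd_two_of_totient_le_one (Nat.pos_of_ne_zero hk0) hφk
    have hle : k ≤ 2 := Nat.le_of_dvd (by norm_num) h2
    interval_cases k <;> simp_all
  subst hk2
  refine ⟨mul_comm d 2, ?_⟩
  rcases Nat.even_or_odd d with he | ho
  · exfalso
    have h2d : 2 ∣ d := he.two_dvd
    have : Nat.totient (2 * d) = 2 * Nat.totient d :=
      Nat.totient_mul_of_prime_of_dvd Nat.prime_two h2d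
    rw [mul_comm d 2] at htot
    have hφd : 0 < Nat.totient d := Nat.totient_pos.mpr hd
    omega
  · exact ho

end Aux

theorem stmt19 {G : Type*} [Group G] [Fintype G] (x y : G)
    (hXY : diamondClass x ≠ diamondClass y)
    (hcard : (diamondClass x).ncard = (diamondClass y).ncard)
    (hne1 : (diamondClass x).ncard ≠ 1)
    (hpow : ∃ m : ℕ, 0 < m ∧ y = x ^ m) :
    orderOf x = 2 * orderOf y ∧ Odd (orderOf y) ∧
      orderOf (x ^ orderOf y) = 2 ∧ x ^ orderOf y ∉ diamondClass x ∧
      ∀ a ∈ diamondClass x, ∃ m : ℕ, 0 < m ∧ x ^ orderOf y = a ^ m := by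
  classical
  obtain ⟨m, hm0, hym⟩ := hpow
  have hd0 : 0 < orderOf y := orderOf_pos y
  have hyle : Subgroup.zpowers y ≤ Subgroup.zpowers x := by
    rw [Subgroup.zpowers_le, hym]
    exact pow_mem (Subgroup.mem_zpowers x) m
  have hdvd : orderOf y ∣ orderOf x := by
    rw [← Nat.card_zpowers, ← Nat.card_zpowers]
    exact Subgroup.card_dvd_of_le hyle
  have hzne : Subgroup.zpowers x ≠ Subgroup.zpowers y := by
    intro h
    exact hXY (by simp only [diamondClass, h])
  have hdn : orderOf y ≠ orderOf x := by
    intro h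
    refine hzne (subgroupEqOfLeOfCard hyle ?_).symm
    rw [Nat.card_zpowers, Nat.card_zpowers, h]
  have htot : Nat.totient (orderOf y) = Nat.totient (orderOf x) := by
    have h1 := diamondNcard x
    have h2 := diamondNcard y
    omega
  obtain ⟨h2d, hodd⟩ := totientEqOfDvd hd0 hdvd hdn htot
  have hφn : Nat.totient (orderOf x) ≠ 1 := by
    rw [← diamondNcard x]; exact hne1
  have hd1 : orderOf y ≠ 1 := by
    rintro h
    rw [h, mul_one] at h2d
    rw [h2d] at hφn
    simp at hφn
  have hgcd : Nat.gcd (orderOf x) (orderOf y) = orderOf y := Nat.gcd_eq_right hdvd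
  have hτ : orderOf (x ^ orderOf y) = 2 := by
    rw [orderOf_pow, hgcd, h2d, Nat.mul_div_cancel _ hd0]
  refine ⟨h2d, hodd, hτ, ?_, ?_⟩
  · intro hmem
    have hmem' : Subgroup.zpowers (x ^ orderOf y) = Subgroup.zpowers x := hmem
    have : orderOf (x ^ orderOf y) = orderOf x := by
      rw [← Nat.card_zpowers, hmem', Nat.card_zpowers]
    rw [hτ] at this
    have : orderOf y = 1 := by omega
    exact hd1 this
  · intro a ha
    have ha' : Subgroup.zpowers a = Subgroup.zpowers x := ha
    have hx : x ∈ Subgroup.zpowers a := ha' ▸ Subgroup.mem_zpowers x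
    obtain ⟨k, hk'⟩ := mem_powers_iff_mem_zpowers.mpr hx
    have hk : a ^ k = x := hk'
    have hk0 : k ≠ 0 := by
      rintro rfl
      rw [pow_zero] at hk
      have : orderOf x = 1 := by rw [← hk]; exact orderOf_one
      omega
    refine ⟨k * orderOf y, by positivity, ?_⟩
    rw [← hk, ← pow_mul]
end
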